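/- Let (cₙ) be a sequence of reals with ∑ cₙ² < ∞. Then for almost every s ∈ 2^ℕ (with respect to the fair-coin product measure), the series ∑ₙ (−1)^{s(n)} cₙ converges. -/

import Mathlib

open Filter Topology

/-- Partial sums of the subseries of `a` over the set `A`, up to index `m`. -/
noncomputable def psum (a : ℕ → ℝ) (A : Set ℕ) (m : ℕ) : ℝ :=
  ∑ n ∈ Finset.range (m + 1), Set.indicator A a n

/-- A series `∑ aₙ` is conditionally convergent: its partial sums converge
but the partial sums of `∑ |aₙ|` tend to infinity. -/
def CondConv (a : ℕ → ℝ) : Prop :=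
  (∃ L : ℝ, Tendsto (fun m => ∑ n ∈ Finset.range m, a n) atTop (𝓝 L)) ∧
  Tendsto (fun m => ∑ n ∈ Finset.range m, |a n|) atTop atTop

section Stmt11AuxSection
open MeasureTheory ProbabilityTheory
namespace Stmt11Aux

noncomputable def rad (n : ℕ) (x : ℕ → Bool) : ℝ := if x n then -1 else 1

def cyl (s : Finset ℕ) (f : ℕ → Bool) : Set (ℕ → Bool) := {x | ∀ k ∈ s, x k = f k}

lemma measurableSet_cyl (s : Finset ℕ) (f : ℕ → Bool) : MeasurableSet (cyl s f) := by
  have h : cyl s f = ⋂ k ∈ s, (fun x : ℕ → Bool => x k) ⁻¹' {f k} := by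
    ext x; simp [cyl]
  rw [h]
  exact MeasurableSet.biInter s.countable_toSet
    fun k _ => (measurable_pi_apply k) (measurableSet_singleton (f k))

def cylSet (i : ℕ) : Set (Set (ℕ → Bool)) :=
  {C | ∃ s : Finset ℕ, ∃ f : ℕ → Bool, (∀ k ∈ s, k < i) ∧ C = cyl s f}

lemma isPiSystem_cylSet (i : ℕ) : IsPiSystem (cylSet i) := by
  rintro C1 ⟨s1, f1, hs1, rfl⟩ C2 ⟨s2, f2, hs2, rfl⟩ hne
  obtain ⟨y, hy1, hy2⟩ := hne
  refine ⟨s1 ∪ s2, fun k => if k ∈ s1 then f1 k else f2 k, ?_, ?_⟩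
  · intro k hk
    rcases Finset.mem_union.1 hk with h | h
    exacts [hs1 k h, hs2 k h]
  · ext x
    simp only [Set.mem_inter_iff, cyl, Set.mem_setOf_eq, Finset.mem_union]
    constructor
    · rintro ⟨h1, h2⟩ k hk
      rcases hk with hk | hk
      · simp [hk, h1 k hk]
      · by_cases hk1 : k ∈ s1
        · simp [hk1, h1 k hk1]
        · simp [hk1, h2 k hk]
    · intro h
      constructor
      · intro k hk
        have := h k (Or.inl hk); simpa [hk] using this
      · intro k hk
        have := h k (Or.inr hk)
        by_cases hk1 : k ∈ s1
        · rw [this, if_pos hk1, ← hy1 k hk1, hy2 k hk]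
        · simpa [hk1] using this

noncomputable def filt : Filtration ℕ (inferInstance : MeasurableSpace (ℕ → Bool)) where
  seq i := MeasurableSpace.generateFrom (cylSet i)
  mono' := fun i j hij => MeasurableSpace.generateFrom_mono
    (by rintro C ⟨s, f, hs, rfl⟩; exact ⟨s, f, fun k hk => lt_of_lt_of_le (hs k hk) hij, rfl⟩)
  le' i := MeasurableSpace.generateFrom_le
    (by rintro C ⟨s, f, hs, rfl⟩; exact measurableSet_cyl s f)

lemma rad_eq (n : ℕ) : rad n = fun x =>
    1 - 2 * Set.indicator {x : ℕ → Bool | x n = true} (1 : (ℕ → Bool) → ℝ) x := by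
  funext x
  by_cases h : x n <;> simp [rad, h, Set.indicator] <;> norm_num

lemma measurable_rad_filt {n i : ℕ} (h : n < i) : Measurable[filt i] (rad n) := by
  rw [rad_eq]
  have hA : MeasurableSet[filt i] {x : ℕ → Bool | x n = true} :=
    MeasurableSpace.measurableSet_generateFrom
      ⟨{n}, fun _ => true, by simp [h], by ext x; simp [cyl]⟩
  exact measurable_const.sub
    ((measurable_const.indicator hA).const_mul 2)

lemma measurable_rad (n : ℕ) : Measurable (rad n) :=
  (measurable_rad_filt (Nat.lt_succ_self n)).mono (filt.le _) le_rfl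

def m1 (n : ℕ) : MeasurableSpace (ℕ → Bool) :=
  MeasurableSpace.comap (fun x => x n) ⊤

lemma m1_le (n : ℕ) : m1 n ≤ (inferInstance : MeasurableSpace (ℕ → Bool)) :=
  measurable_iff_comap_le.mp (measurable_pi_apply n)

lemma m1_eq (n : ℕ) :
    m1 n = MeasurableSpace.generateFrom {{x : ℕ → Bool | x n = true}} := by
  refine le_antisymm ?_ ?_
  · rw [m1]
    rintro S ⟨B, -, rfl⟩
    have hA : MeasurableSet[MeasurableSpace.generateFrom {{x : ℕ → Bool | x n = true}}]
        {x : ℕ → Bool | x n = true} := MeasurableSpace.measurableSet_generateFrom rfl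
    by_cases ht : true ∈ B <;> by_cases hf : false ∈ B
    · have h : (fun x : ℕ → Bool => x n) ⁻¹' B = Set.univ := by
        ext x; cases hx : x n <;> simp [ht, hf, hx]
      rw [h]
      exact @MeasurableSet.univ _ (MeasurableSpace.generateFrom {{x : ℕ → Bool | x n = true}})
    · have h : (fun x : ℕ → Bool => x n) ⁻¹' B = {x : ℕ → Bool | x n = true} := by
        ext x; cases hx : x n <;> simp [ht, hf, hx]
      rw [h]; exact hA
    · have h : (fun x : ℕ → Bool => x n) ⁻¹' B = {x : ℕ → Bool | x n = true}ᶜ := by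
        ext x; cases hx : x n <;> simp [ht, hf, hx]
      rw [h]; exact hA.compl
    · have h : (fun x : ℕ → Bool => x n) ⁻¹' B = ∅ := by
        ext x; cases hx : x n <;> simp [ht, hf, hx]
      rw [h]
      exact @MeasurableSet.empty _ (MeasurableSpace.generateFrom {{x : ℕ → Bool | x n = true}})
  · exact MeasurableSpace.generateFrom_le (by rintro C rfl; exact ⟨{true}, trivial, rfl⟩)

lemma measurable_rad_m1 (n : ℕ) : Measurable[m1 n] (rad n) := by
  rw [rad_eq]
  have hA : MeasurableSet[m1 n] {x : ℕ → Bool | x n = true} := ⟨{true}, trivial, rfl⟩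
  exact measurable_const.sub ((measurable_const.indicator hA).const_mul 2)


/-- partial sums -/
noncomputable def F (c : ℕ → ℝ) (m : ℕ) (x : ℕ → Bool) : ℝ :=
  ∑ n ∈ Finset.range m, rad n x * c n

lemma rad_abs (n : ℕ) (x : ℕ → Bool) : |rad n x| = 1 := by
  by_cases h : x n <;> simp [rad, h]


section
variable {μ : Measure (ℕ → Bool)}
  (hμ : ∀ (s : Finset ℕ) (f : ℕ → Bool),
      μ {x : ℕ → Bool | ∀ i ∈ s, x i = f i} = (1 / 2 : ENNReal) ^ s.card)

include hμ

lemma hμ' (s : Finset ℕ) (f : ℕ → Bool) : μ (cyl s f) = (1 / 2 : ENNReal) ^ s.card := hμ s f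

lemma isProb : IsProbabilityMeasure μ := by
  constructor
  have := hμ ∅ (fun _ => true)
  simpa using this

omit hμ in
lemma setA_eq (n : ℕ) : {x : ℕ → Bool | x n = true} = cyl {n} (fun _ => true) := by
  ext x; simp [cyl]

lemma measure_A (n : ℕ) : μ {x : ℕ → Bool | x n = true} = 1 / 2 := by
  rw [setA_eq, hμ' (μ := μ) hμ]
  simp

lemma integral_rad (n : ℕ) : ∫ x, rad n x ∂μ = 0 := by
  have : IsProbabilityMeasure μ := isProb hμ
  have hA : MeasurableSet {x : ℕ → Bool | x n = true} := by
    rw [setA_eq]; exact measurableSet_cyl _ _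
  rw [rad_eq]
  rw [integral_sub (integrable_const 1)
    ((((integrable_const (1:ℝ)).indicator hA).congr (by simp [Pi.one_def])).const_mul 2)]
  rw [integral_const_mul, integral_indicator_one hA, measureReal_def, measure_A hμ]
  simp

lemma indep_rad {i n : ℕ} (h : i ≤ n) : Indep (m1 n) (filt i) μ := by
  have : IsProbabilityMeasure μ := isProb hμ
  refine IndepSets.indep (m1_le n) (filt.le i) (IsPiSystem.singleton _)
    (isPiSystem_cylSet i) (m1_eq n) rfl ?_
  rw [IndepSets_iff]
  rintro t1 t2 ht1 ht2
  rw [Set.mem_singleton_iff] at ht1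
  subst ht1
  obtain ⟨s, f, hs, rfl⟩ := ht2
  have hns : n ∉ s := fun hn => absurd (hs n hn) (not_lt.2 h)
  have hset : {x : ℕ → Bool | x n = true} ∩ cyl s f
      = cyl (insert n s) (Function.update f n true) := by
    ext x
    simp only [Set.mem_inter_iff, Set.mem_setOf_eq, cyl, Finset.mem_insert]
    constructor
    · rintro ⟨h1, h2⟩ k hk
      rcases hk with rfl | hk
      · simp [h1]
      · rw [Function.update_of_ne (by rintro rfl; exact hns hk) _ f]
        exact h2 k hk
    · intro hx
      refine ⟨by simpa using hx n (Or.inl rfl), fun k hk => ?_⟩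
      have := hx k (Or.inr hk)
      rwa [Function.update_of_ne (by rintro rfl; exact hns hk) _ f] at this
  rw [hset, hμ' (μ := μ) hμ, hμ' (μ := μ) hμ, setA_eq, hμ' (μ := μ) hμ]
  rw [Finset.card_insert_of_notMem hns]
  simp [pow_succ, mul_comm]


omit hμ in
lemma cyl_pair {k l : ℕ} (f : ℕ → Bool) : cyl {k, l} f = {x | x k = f k ∧ x l = f l} := by
  ext x
  simp only [cyl, Set.mem_setOf_eq, Finset.mem_insert, Finset.mem_singleton]
  constructor
  · intro h
    exact ⟨h k (Or.inl rfl), h l (Or.inr rfl)⟩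
  · rintro ⟨h1, h2⟩ i (rfl | rfl)
    · exact h1
    · exact h2

omit hμ in
lemma D_eq {k l : ℕ} (hkl : k ≠ l) : {x : ℕ → Bool | x k ≠ x l}
    = cyl {k, l} (fun i => decide (i = k)) ∪ cyl {k, l} (fun i => decide (i = l)) := by
  rw [cyl_pair, cyl_pair]
  ext x
  simp only [Set.mem_setOf_eq, Set.mem_union, decide_eq_true_eq]
  rw [(by simp [Ne.symm hkl] : decide (l = k) = false), (by simp [hkl] : decide (k = l) = false),
    decide_true]
  cases hx : x k <;> cases hy : x l <;> simp [hx, hy]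

lemma measure_D {k l : ℕ} (hkl : k ≠ l) : μ {x : ℕ → Bool | x k ≠ x l} = 1 / 2 := by
  rw [D_eq hkl, measure_union ?disj (measurableSet_cyl _ _)]
  case disj =>
    rw [Set.disjoint_left]
    intro x hx1 hx2
    have h1 := hx1 k (Finset.mem_insert_self k {l})
    have h2 := hx2 k (Finset.mem_insert_self k {l})
    rw [h1] at h2
    simp [hkl] at h2
  rw [hμ' hμ, hμ' hμ]
  have hcard : ({k, l} : Finset ℕ).card = 2 := by
    rw [Finset.card_insert_of_notMem (by simp [hkl]), Finset.card_singleton]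
  rw [hcard, ← two_mul, pow_two, ← mul_assoc]
  rw [(by rw [one_div]; exact ENNReal.mul_inv_cancel (by norm_num) (by norm_num) :
    (2 : ENNReal) * (1 / 2) = 1), one_mul]

omit hμ in
lemma prod_eq {k l : ℕ} : (fun x => rad k x * rad l x) = fun x =>
    1 - 2 * Set.indicator {x : ℕ → Bool | x k ≠ x l} (1 : (ℕ → Bool) → ℝ) x := by
  funext x
  by_cases hx : x k <;> by_cases hy : x l <;>
    simp [rad, hx, hy, Set.indicator, Set.mem_setOf_eq] <;> norm_num

lemma integral_rad_mul {k l : ℕ} (hkl : k ≠ l) : ∫ x, rad k x * rad l x ∂μ = 0 := by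
  have : IsProbabilityMeasure μ := isProb hμ
  have hD : MeasurableSet {x : ℕ → Bool | x k ≠ x l} := by
    rw [D_eq hkl]
    exact (measurableSet_cyl _ _).union (measurableSet_cyl _ _)
  rw [show (fun x => rad k x * rad l x) = _ from prod_eq (k := k) (l := l)]
  rw [integral_sub (integrable_const 1)
    ((((integrable_const (1:ℝ)).indicator hD).congr (by simp [Pi.one_def])).const_mul 2)]
  rw [integral_const_mul, integral_indicator_one hD, measureReal_def, measure_D hμ hkl]
  simp


lemma integrable_radc (c : ℕ → ℝ) (k : ℕ) :
    Integrable (fun x => rad k x * c k) μ := by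
  have : IsProbabilityMeasure μ := isProb hμ
  refine Integrable.mono' (integrable_const |c k|)
    (((measurable_rad k).mul_const _).aestronglyMeasurable) (ae_of_all _ fun x => ?_)
  rw [Real.norm_eq_abs, abs_mul, rad_abs, one_mul]

lemma integrable_radrad (a b : ℝ) (k l : ℕ) :
    Integrable (fun x => (rad k x * a) * (rad l x * b)) μ := by
  have : IsProbabilityMeasure μ := isProb hμ
  refine Integrable.mono' (integrable_const (|a| * |b|))
    ((((measurable_rad k).mul_const _).mul ((measurable_rad l).mul_const _)).aestronglyMeasurable)
    (ae_of_all _ fun x => ?_)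
  rw [Real.norm_eq_abs, abs_mul, abs_mul, abs_mul, rad_abs, rad_abs, one_mul, one_mul]

lemma integrable_F (c : ℕ → ℝ) (m : ℕ) : Integrable (F c m) μ := by
  have : F c m = fun x => ∑ n ∈ Finset.range m, rad n x * c n := rfl
  rw [this]
  exact integrable_finset_sum _ fun k _ => integrable_radc hμ c k

lemma integral_F_sq (c : ℕ → ℝ) (m : ℕ) :
    ∫ x, (F c m x) ^ 2 ∂μ = ∑ k ∈ Finset.range m, c k ^ 2 := by
  have h1 : ∀ x, (F c m x) ^ 2 = ∑ k ∈ Finset.range m, ∑ l ∈ Finset.range m,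
      (rad k x * c k) * (rad l x * c l) := by
    intro x
    rw [sq, F, Finset.sum_mul_sum]
  rw [integral_congr_ae (ae_of_all _ h1)]
  rw [integral_finset_sum _ fun k _ =>
    integrable_finset_sum _ fun l _ => integrable_radrad hμ (c k) (c l) k l]
  refine Finset.sum_congr rfl fun k hk => ?_
  rw [integral_finset_sum _ fun l _ => integrable_radrad hμ (c k) (c l) k l]
  rw [Finset.sum_eq_single k]
  · have : ∀ x, (rad k x * c k) * (rad k x * c k) = (rad k x * rad k x) * (c k * c k) := by
      intro x; ring
    rw [integral_congr_ae (ae_of_all _ this)]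
    have hone : ∀ x : ℕ → Bool, rad k x * rad k x = 1 := by
      intro x; by_cases h : x k <;> simp [rad, h]
    simp only [hone, one_mul]
    have : IsProbabilityMeasure μ := isProb hμ
    rw [integral_const]
    simp [sq]
  · intro l _ hlk
    have : ∀ x, (rad k x * c k) * (rad l x * c l) = (rad k x * rad l x) * (c k * c l) := by
      intro x; ring
    rw [integral_congr_ae (ae_of_all _ this), integral_mul_const,
      integral_rad_mul hμ (Ne.symm hlk), zero_mul]
  · intro hk'; exact absurd hk hk'

lemma condexp_radc (c : ℕ → ℝ) {i n : ℕ} (h : i ≤ n) :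
    μ[fun x => rad n x * c n|filt i] =ᵐ[μ] 0 := by
  have : IsProbabilityMeasure μ := isProb hμ
  have hsm : StronglyMeasurable[m1 n] (fun x => rad n x * c n) :=
    ((measurable_rad_m1 n).mul_const _).stronglyMeasurable
  have hindep := indep_rad hμ h
  have := condExp_indep_eq (m1_le n) (filt.le i) hsm hindep
  refine this.trans (ae_of_all _ fun x => ?_)
  rw [integral_mul_const, integral_rad hμ, zero_mul]
  rfl

lemma martingale_F (c : ℕ → ℝ) : Martingale (F c) filt μ := by
  have : IsProbabilityMeasure μ := isProb hμ
  constructor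
  · intro i
    refine Finset.stronglyMeasurable_fun_sum _ fun k hk => ?_
    exact ((measurable_rad_filt (Finset.mem_range.mp hk)).mul_const _).stronglyMeasurable
  · intro i j hij
    have hdecomp : F c j = F c i + ∑ k ∈ Finset.Ico i j, (fun x => rad k x * c k) := by
      funext x
      simp only [Pi.add_apply, Finset.sum_apply, F]
      exact (Finset.sum_range_add_sum_Ico (fun n => rad n x * c n) hij).symm
    rw [hdecomp]
    have hint2 : Integrable (∑ k ∈ Finset.Ico i j, fun x => rad k x * c k) μ := by
      rw [Finset.sum_fn]
      exact integrable_finset_sum _ fun k _ => integrable_radc hμ c k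
    refine (condExp_add (integrable_F hμ c i) hint2 _).trans ?_
    have h1 : μ[F c i|filt i] =ᵐ[μ] F c i := by
      refine Filter.EventuallyEq.of_eq ?_
      refine condExp_of_stronglyMeasurable (filt.le i) ?_ (integrable_F hμ c i)
      refine Finset.stronglyMeasurable_fun_sum _ fun k hk => ?_
      exact ((measurable_rad_filt (Finset.mem_range.mp hk)).mul_const _).stronglyMeasurable
    have h2 : μ[∑ k ∈ Finset.Ico i j, (fun x => rad k x * c k)|filt i] =ᵐ[μ] 0 := by
      refine (condExp_finsetSum (fun k _ => integrable_radc hμ c k) _).trans ?_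
      have hall : ∀ᵐ x ∂μ, ∀ k ∈ Finset.Ico i j,
          (μ[fun y => rad k y * c k|filt i]) x = 0 :=
        (ae_ball_iff (Finset.Ico i j).countable_toSet).mpr
          fun k hk => condexp_radc hμ c (Finset.mem_Ico.mp hk).1
      refine hall.mono fun x hx => ?_
      simp only [Finset.sum_apply, Pi.zero_apply]
      exact Finset.sum_eq_zero hx
    filter_upwards [h1, h2] with x hx1 hx2
    simp only [Pi.add_apply, hx1, hx2, Pi.zero_apply, add_zero]


omit hμ in
lemma measurable_F (c : ℕ → ℝ) (m : ℕ) : Measurable (F c m) := by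
  have : F c m = fun x => ∑ n ∈ Finset.range m, rad n x * c n := rfl
  rw [this]
  exact Finset.measurable_sum _ fun k _ => (measurable_rad k).mul_const _

omit hμ in
lemma abs_F_le (c : ℕ → ℝ) (m : ℕ) (x : ℕ → Bool) :
    |F c m x| ≤ ∑ n ∈ Finset.range m, |c n| := by
  refine (Finset.abs_sum_le_sum_abs _ _).trans ?_
  refine Finset.sum_le_sum fun k _ => ?_
  rw [abs_mul, rad_abs, one_mul]

lemma integrable_F_sq (c : ℕ → ℝ) (m : ℕ) :
    Integrable (fun x => (F c m x) ^ 2) μ := by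
  have : IsProbabilityMeasure μ := isProb hμ
  refine Integrable.mono' (integrable_const ((∑ n ∈ Finset.range m, |c n|) ^ 2))
    (((measurable_F c m).pow_const 2).aestronglyMeasurable) (ae_of_all _ fun x => ?_)
  rw [Real.norm_eq_abs, abs_pow, sq_abs, ← sq_abs]
  exact pow_le_pow_left₀ (abs_nonneg _) (abs_F_le c m x) 2

lemma eLpNorm_F_le (c : ℕ → ℝ) (hc : Summable (fun n => c n ^ 2)) (m : ℕ) :
    eLpNorm (F c m) 1 μ ≤ (Real.sqrt (∑' n, c n ^ 2)).toNNReal := by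
  have : IsProbabilityMeasure μ := isProb hμ
  have hT0 : (0:ℝ) ≤ ∑' n, c n ^ 2 := tsum_nonneg fun n => sq_nonneg _
  refine le_trans (eLpNorm_le_eLpNorm_of_exponent_le (by norm_num : (1:ENNReal) ≤ 2)
    (measurable_F c m).aestronglyMeasurable) ?_
  rw [eLpNorm_eq_lintegral_rpow_enorm_toReal (by norm_num) (by norm_num)]
  have htoReal : (2 : ENNReal).toReal = 2 := by norm_num
  rw [htoReal]
  simp only [enorm_eq_nnnorm]
  have key : ∫⁻ x, (‖F c m x‖₊ : ENNReal) ^ (2:ℝ) ∂μ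
      = ENNReal.ofReal (∑ k ∈ Finset.range m, c k ^ 2) := by
    have hpt : ∀ x, (‖F c m x‖₊ : ENNReal) ^ (2:ℝ) = ENNReal.ofReal ((F c m x) ^ 2) := by
      intro x
      rw [← sq_abs, ← Real.norm_eq_abs, ENNReal.ofReal_pow (norm_nonneg _),
        ofReal_norm, enorm_eq_nnnorm, ← ENNReal.rpow_natCast]
      norm_num
    rw [lintegral_congr hpt,
      ← ofReal_integral_eq_lintegral_ofReal (integrable_F_sq hμ c m)
        (ae_of_all _ fun x => sq_nonneg _), integral_F_sq hμ c m]
  rw [key]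
  have hle : ENNReal.ofReal (∑ k ∈ Finset.range m, c k ^ 2)
      ≤ ENNReal.ofReal (∑' n, c n ^ 2) :=
    ENNReal.ofReal_le_ofReal (hc.sum_le_tsum _ (fun k _ => sq_nonneg _))
  calc (ENNReal.ofReal (∑ k ∈ Finset.range m, c k ^ 2)) ^ (1/2:ℝ)
      ≤ (ENNReal.ofReal (∑' n, c n ^ 2)) ^ (1/2:ℝ) :=
        ENNReal.rpow_le_rpow hle (by norm_num)
    _ = ENNReal.ofReal ((∑' n, c n ^ 2) ^ (1/2:ℝ)) :=
        ENNReal.ofReal_rpow_of_nonneg hT0 (by norm_num)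
    _ = (Real.sqrt (∑' n, c n ^ 2)).toNNReal := by
        rw [Real.sqrt_eq_rpow]; rfl

end
end Stmt11Aux
end Stmt11AuxSection

open MeasureTheory in
theorem stmt11 (μ : Measure (ℕ → Bool))
    (hμ : ∀ (s : Finset ℕ) (f : ℕ → Bool),
      μ {x : ℕ → Bool | ∀ i ∈ s, x i = f i} = (1 / 2 : ENNReal) ^ s.card)
    (c : ℕ → ℝ) (hc : Summable (fun n => c n ^ 2)) :
    ∀ᵐ s ∂μ, ∃ L : ℝ,
      Tendsto (fun m => ∑ n ∈ Finset.range m, (if s n then (-1 : ℝ) else 1) * c n)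
        atTop (𝓝 L) := by
  open Stmt11Aux in
  have : IsProbabilityMeasure μ := Stmt11Aux.isProb hμ
  have hmart := martingale_F hμ c
  have hbdd := eLpNorm_F_le hμ c hc
  have hconv := hmart.submartingale.exists_ae_tendsto_of_bdd hbdd
  filter_upwards [hconv] with x hx
  obtain ⟨L, hL⟩ := hx
  exact ⟨L, hL⟩
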